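/- Let q = p^e be a prime power and t ≥ 3. For any integer s with 0 < s < t, there is no natural number h such that (q^{s+1}-1)/(q-1) ≡ p^h (mod (q^t-1)/(q-1)). -/

import Mathlib

open Finset

theorem stmt_0 (p e t s : ℕ) (hp : p.Prime) (he : 1 ≤ e) (ht : 3 ≤ t)
    (hs0 : 0 < s) (hst : s < t) :
    ¬ ∃ h : ℕ,
      (∑ i ∈ Finset.range (s + 1), (p ^ e) ^ i) ≡ p ^ h
        [MOD ∑ i ∈ Finset.range t, (p ^ e) ^ i] := by
  rintro ⟨h, hcong⟩
  set q := p ^ e with hq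
  set N := ∑ i ∈ Finset.range t, q ^ i with hN
  have hp2 : 2 ≤ p := hp.two_le
  have hq2 : 2 ≤ q := by
    calc 2 ≤ p := hp2
    _ = p ^ 1 := (pow_one p).symm
    _ ≤ p ^ e := Nat.pow_le_pow_right (by omega) he
  have het : 0 < e * t := by positivity
  -- N ≥ 1 + q
  have hNge : 1 + q ≤ N := by
    have h2t : Finset.range 2 ⊆ Finset.range t := Finset.range_subset_range.mpr (by omega)
    calc 1 + q = ∑ i ∈ Finset.range 2, q ^ i := by simp [Finset.sum_range_succ]
    _ ≤ N := Finset.sum_le_sum_of_subset h2t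
  -- q^t = 1 in ZMod N
  have hqt : (q : ZMod N) ^ t = 1 := by
    have hdvd : (N : ℤ) ∣ (q : ℤ) ^ t - 1 := by
      refine ⟨(q : ℤ) - 1, ?_⟩
      rw [← geom_sum_mul]
      push_cast [hN]
      ring
    have := (ZMod.intCast_zmod_eq_zero_iff_dvd _ _).mpr hdvd
    push_cast at this
    linear_combination this
  have hpe : (p : ZMod N) ^ e = (q : ZMod N) := by push_cast [hq]; ring
  -- reduce h mod e*t
  set h' := h % (e * t) with hh'
  have hh'lt : h' < e * t := Nat.mod_lt _ het
  have hph : (p : ZMod N) ^ h = (p : ZMod N) ^ h' := by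
    conv_lhs => rw [← Nat.div_add_mod h (e * t)]
    rw [pow_add, pow_mul, pow_mul, hpe, hqt, one_pow, one_mul]
  set a := h' / e with ha
  set b := h' % e with hb
  have hab : e * a + b = h' := Nat.div_add_mod h' e
  have hat : a < t := by
    rw [ha]
    exact Nat.div_lt_of_lt_mul (by omega)
  have hbe : b < e := Nat.mod_lt _ (by omega)
  have hpb : p ^ b < q := Nat.pow_lt_pow_right (by omega) hbe
  -- main congruence in ZMod N
  have hz : ((∑ i ∈ Finset.range (s + 1), q ^ i : ℕ) : ZMod N)
      = (q : ZMod N) ^ a * ((p ^ b : ℕ) : ZMod N) := by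
    have := (ZMod.natCast_eq_natCast_iff _ _ _).mpr hcong
    rw [this, Nat.cast_pow, hph, ← hab, pow_add, pow_mul, hpe]
    push_cast
    ring
  set c := t - a with hc
  have hca : c + a = t := by omega
  -- window sum
  set g : ℕ → ℕ := fun i => (c + i) % t with hg
  set S := ∑ i ∈ Finset.range (s + 1), q ^ g i with hS
  have hpowmod : ∀ m : ℕ, (q : ZMod N) ^ m = (q : ZMod N) ^ (m % t) := by
    intro m
    conv_lhs => rw [← Nat.div_add_mod m t]
    rw [pow_add, pow_mul, hqt, one_pow, one_mul]
  have hSz : ((S : ℕ) : ZMod N) = ((p ^ b : ℕ) : ZMod N) := by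
    have h1 : ((S : ℕ) : ZMod N) = (q : ZMod N) ^ c *
        ((∑ i ∈ Finset.range (s + 1), q ^ i : ℕ) : ZMod N) := by
      push_cast [hS]
      rw [Finset.mul_sum]
      refine Finset.sum_congr rfl fun i _ => ?_
      rw [← pow_add, hpowmod (c + i)]
    rw [h1, hz, ← mul_assoc, ← pow_add, hca, hqt, one_mul]
  have hSeq : S ≡ p ^ b [MOD N] := (ZMod.natCast_eq_natCast_iff _ _ _).mp hSz
  -- g injective on range (s+1)
  have hginj : ∀ i ∈ Finset.range (s + 1), ∀ j ∈ Finset.range (s + 1),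
      g i = g j → i = j := by
    intro i hi j hj hij
    simp only [Finset.mem_range] at hi hj
    have h1 : (c + i) ≡ (c + j) [MOD t] := hij
    have h2 : i ≡ j [MOD t] := Nat.ModEq.add_left_cancel' c h1
    have h3 : i % t = j % t := h2
    rw [Nat.mod_eq_of_lt (by omega), Nat.mod_eq_of_lt (by omega)] at h3
    exact h3
  set A := (Finset.range (s + 1)).image g with hA
  have hAsub : A ⊆ Finset.range t := by
    intro x hx
    simp only [hA, Finset.mem_image] at hx
    obtain ⟨i, _, rfl⟩ := hx
    exact Finset.mem_range.mpr (Nat.mod_lt _ (by omega))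
  have hAcard : A.card = s + 1 := by
    rw [hA, Finset.card_image_of_injOn hginj, Finset.card_range]
  have hSA : S = ∑ j ∈ A, q ^ j := by
    rw [hA, Finset.sum_image hginj]
  have hpbN : p ^ b < N := by omega
  rcases eq_or_lt_of_le (Nat.succ_le_of_lt hst) with hst1 | hst1
  · -- s + 1 = t : A = range t, S = N
    have hAeq : A = Finset.range t := by
      apply Finset.eq_of_subset_of_card_le hAsub
      rw [hAcard, Finset.card_range]; omega
    have hSN : S = N := by rw [hSA, hAeq, hN]
    have h2 : S % N = p ^ b % N := hSeq
    rw [hSN, Nat.mod_self, Nat.mod_eq_of_lt hpbN] at h2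
    have : 0 < p ^ b := Nat.pow_pos (by omega)
    omega
  · -- s + 1 < t : S < N and S ≥ 1 + q
    have hAss : A ⊂ Finset.range t := by
      refine Finset.ssubset_iff_subset_ne.mpr ⟨hAsub, ?_⟩
      intro hcon
      rw [hcon, Finset.card_range] at hAcard
      omega
    obtain ⟨m, hm1, hm2⟩ := Finset.exists_of_ssubset hAss
    have hSlt : S < N := by
      rw [hSA, hN]
      exact Finset.sum_lt_sum_of_subset hAsub hm1 hm2 (Nat.pow_pos (by omega))
        (fun j _ _ => Nat.zero_le _)
    have hSge : 1 + q ≤ S := by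
      have h01 : ({0, 1} : Finset ℕ) ⊆ Finset.range (s + 1) := by
        intro x hx
        simp only [Finset.mem_insert, Finset.mem_singleton] at hx
        rcases hx with rfl | rfl <;> simp only [Finset.mem_range] <;> omega
      have hle : q ^ g 0 + q ^ g 1 ≤ S := by
        rw [hS]
        calc q ^ g 0 + q ^ g 1 = ∑ i ∈ ({0, 1} : Finset ℕ), q ^ g i := by
              rw [Finset.sum_pair (by norm_num)]
        _ ≤ _ := Finset.sum_le_sum_of_subset h01
      have hne : g 0 ≠ g 1 := fun hcon => by
        have := hginj 0 (by simp) 1 (by simp; omega) hcon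
        omega
      have hq0 : 1 ≤ q ^ g 0 := Nat.one_le_pow _ _ (by omega)
      have hq1 : 1 ≤ q ^ g 1 := Nat.one_le_pow _ _ (by omega)
      rcases Nat.eq_zero_or_pos (g 0) with h0 | h0
      · have : 1 ≤ g 1 := by omega
        have : q ≤ q ^ g 1 := by
          calc q = q ^ 1 := (pow_one q).symm
          _ ≤ q ^ g 1 := Nat.pow_le_pow_right (by omega) this
        omega
      · have : q ≤ q ^ g 0 := by
          calc q = q ^ 1 := (pow_one q).symm
          _ ≤ q ^ g 0 := Nat.pow_le_pow_right (by omega) h0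
        omega
    have : S % N = p ^ b % N := hSeq
    rw [Nat.mod_eq_of_lt hSlt, Nat.mod_eq_of_lt hpbN] at this
    omega
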